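/- Let G be a bipartite graph with a skew-symmetric weight function w on its directed edges such that every cycle of G has nonzero circulation (the sum of weights of edges along the cycle in a fixed orientation). Then the induced weight function on undirected edges is isolating: G has at most one minimum-weight perfect matching. -/

import Mathlib

namespace Stmt0Aux

variable {V : Type*} {G : SimpleGraph V} {M₁ M₂ : V → V}

/-- The alternating walk of `2n` steps starting at `x`, alternating `M₁`-edges
and `M₂`-edges. -/
def cycW (h1 : ∀ v, G.Adj v (M₁ v)) (h2 : ∀ v, G.Adj v (M₂ v)) :
    (n : ℕ) → (x : V) → G.Walk x ((fun y => M₂ (M₁ y))^[n] x)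
  | 0, _ => SimpleGraph.Walk.nil
  | n + 1, x =>
      (SimpleGraph.Walk.cons (h1 x) (SimpleGraph.Walk.cons (h2 (M₁ x))
        (cycW h1 h2 n (M₂ (M₁ x))))).copy rfl
        (Function.iterate_succ_apply (fun y => M₂ (M₁ y)) n x).symm

/-- The vertex list of the alternating walk, without the final vertex. -/
def vl (M₁ M₂ : V → V) : ℕ → V → List V
  | 0, _ => []
  | n + 1, x => x :: M₁ x :: vl M₁ M₂ n (M₂ (M₁ x))

lemma support_cycW (h1 : ∀ v, G.Adj v (M₁ v)) (h2 : ∀ v, G.Adj v (M₂ v)) :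
    ∀ (n : ℕ) (x : V), (cycW h1 h2 n x).support
      = vl M₁ M₂ n x ++ [(fun y => M₂ (M₁ y))^[n] x]
  | 0, x => by simp [cycW, vl]
  | n + 1, x => by
    simp [cycW, vl, support_cycW h1 h2 n (M₂ (M₁ x)),
      Function.iterate_succ_apply]

lemma mem_vl {n : ℕ} {x y : V} (hy : y ∈ vl M₁ M₂ n x) :
    ∃ i < n, y = (fun y => M₂ (M₁ y))^[i] x ∨ y = M₁ ((fun y => M₂ (M₁ y))^[i] x) := by
  induction n generalizing x with
  | zero => simp [vl] at hy
  | succ n ih =>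
    set f := fun y => M₂ (M₁ y) with hf
    simp only [vl, List.mem_cons] at hy
    rcases hy with rfl | rfl | hy
    · exact ⟨0, by omega, Or.inl rfl⟩
    · exact ⟨0, by omega, Or.inr rfl⟩
    · obtain ⟨i, hi, h⟩ := ih hy
      exact ⟨i + 1, by omega, by
        rwa [Function.iterate_succ_apply]⟩

lemma edges_cycW (h1 : ∀ v, G.Adj v (M₁ v)) (h2 : ∀ v, G.Adj v (M₂ v))
    {n : ℕ} {x : V} {e : Sym2 V} (he : e ∈ (cycW h1 h2 n x).edges) :
    ∃ i < n, e = s((fun y => M₂ (M₁ y))^[i] x, M₁ ((fun y => M₂ (M₁ y))^[i] x))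
      ∨ e = s(M₁ ((fun y => M₂ (M₁ y))^[i] x), (fun y => M₂ (M₁ y))^[i+1] x) := by
  induction n generalizing x with
  | zero => simp [cycW] at he
  | succ n ih =>
    simp only [cycW, SimpleGraph.Walk.edges_copy, SimpleGraph.Walk.edges_cons,
      List.mem_cons] at he
    rcases he with rfl | rfl | he
    · exact ⟨0, by omega, Or.inl rfl⟩
    · exact ⟨0, by omega, Or.inr rfl⟩
    · obtain ⟨i, hi, h⟩ := ih he
      refine ⟨i + 1, by omega, ?_⟩
      rwa [Function.iterate_succ_apply, Function.iterate_succ_apply]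

lemma dartsum_cycW (w : V → V → ℤ) (h1 : ∀ v, G.Adj v (M₁ v)) (h2 : ∀ v, G.Adj v (M₂ v)) :
    ∀ (n : ℕ) (x : V), ((cycW h1 h2 n x).darts.map (fun d => w d.toProd.1 d.toProd.2)).sum
      = ∑ i ∈ Finset.range n,
          (w ((fun y => M₂ (M₁ y))^[i] x) (M₁ ((fun y => M₂ (M₁ y))^[i] x))
            + w (M₁ ((fun y => M₂ (M₁ y))^[i] x)) ((fun y => M₂ (M₁ y))^[i+1] x))
  | 0, x => by simp [cycW]
  | n + 1, x => by
    rw [Finset.sum_range_succ']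
    simp only [cycW, SimpleGraph.Walk.darts_copy, SimpleGraph.Walk.darts_cons,
      List.map_cons, List.sum_cons, dartsum_cycW w h1 h2 n (M₂ (M₁ x))]
    simp only [Function.iterate_succ_apply, Function.iterate_zero_apply]
    ring


lemma nodup_vl {V₁ : Set V} (hM₁inj : Function.Injective M₁)
    (hside : ∀ y, y ∈ V₁ → M₁ y ∉ V₁) :
    ∀ (n : ℕ) (x : V),
      (∀ i j, i < n → j < n → (fun y => M₂ (M₁ y))^[i] x = (fun y => M₂ (M₁ y))^[j] x → i = j) →
      (∀ i, (fun y => M₂ (M₁ y))^[i] x ∈ V₁) →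
      (vl M₁ M₂ n x).Nodup
  | 0, x, _, _ => List.nodup_nil
  | n + 1, x, hinj, hV => by
    set f := fun y => M₂ (M₁ y) with hf
    have hx1 : x ∈ V₁ := hV 0
    have hit : ∀ i, f^[i] (f x) = f^[i + 1] x := fun i =>
      (Function.iterate_succ_apply f i x).symm
    have htail : (vl M₁ M₂ n (M₂ (M₁ x))).Nodup := by
      refine nodup_vl hM₁inj hside n (f x) (fun i j hi hj hij => ?_) (fun i => ?_)
      · have := hinj (i + 1) (j + 1) (by omega) (by omega)
          (by rw [← hit, ← hit]; exact hij)
        omega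
      · rw [hit]; exact hV (i + 1)
    have hxm : x ∉ vl M₁ M₂ n (M₂ (M₁ x)) := by
      intro h
      obtain ⟨i, hi, h | h⟩ := mem_vl h
      · exact absurd (hinj 0 (i + 1) (by omega) (by omega) (by rw [← hit]; exact h)) (by omega)
      · rw [hit] at h
        exact hside _ (hV (i + 1)) (h ▸ hx1)
    have hmm : M₁ x ∉ vl M₁ M₂ n (M₂ (M₁ x)) := by
      intro h
      obtain ⟨i, hi, h | h⟩ := mem_vl h
      · rw [hit] at h
        exact hside _ hx1 (h ▸ hV (i + 1))
      · rw [hit] at h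
        exact absurd (hinj 0 (i + 1) (by omega) (by omega) (hM₁inj h)) (by omega)
    have hxM : x ≠ M₁ x := fun h => hside _ hx1 (h ▸ hx1)
    simp only [vl, List.nodup_cons, List.mem_cons]
    exact ⟨by tauto, hmm, htail⟩

end Stmt0Aux


open Classical in
theorem stmt0 {V : Type*} [Fintype V] (G : SimpleGraph V) (V₁ : Set V)
    (hbip : ∀ u v, G.Adj u v → (u ∈ V₁ ↔ v ∉ V₁))
    (w : V → V → ℤ) (hskew : ∀ u v, w u v = - w v u)
    (hcirc : ∀ (v : V) (p : G.Walk v v), p.IsCycle →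
      (p.darts.map (fun d => w d.toProd.1 d.toProd.2)).sum ≠ 0)
    (M₁ M₂ : V → V)
    (hM₁ : (∀ v, M₁ (M₁ v) = v) ∧ ∀ v, G.Adj v (M₁ v))
    (hM₂ : (∀ v, M₂ (M₂ v) = v) ∧ ∀ v, G.Adj v (M₂ v))
    (hmin₁ : ∀ M : V → V, ((∀ v, M (M v) = v) ∧ ∀ v, G.Adj v (M v)) →
      (∑ v : V, if v ∈ V₁ then w v (M₁ v) else 0) ≤ ∑ v : V, if v ∈ V₁ then w v (M v) else 0)
    (hmin₂ : ∀ M : V → V, ((∀ v, M (M v) = v) ∧ ∀ v, G.Adj v (M v)) →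
      (∑ v : V, if v ∈ V₁ then w v (M₂ v) else 0) ≤ ∑ v : V, if v ∈ V₁ then w v (M v) else 0) :
    M₁ = M₂ := by
  obtain ⟨hi₁, ha₁⟩ := hM₁
  obtain ⟨hi₂, ha₂⟩ := hM₂
  by_contra hne
  -- a vertex in V₁ where the matchings differ
  obtain ⟨v₀, hv₀V, hv₀⟩ : ∃ v₀, v₀ ∈ V₁ ∧ M₁ v₀ ≠ M₂ v₀ := by
    have ⟨v, hv⟩ : ∃ v, M₁ v ≠ M₂ v := by
      by_contra h
      push_neg at h
      exact hne (funext h)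
    by_cases hvV : v ∈ V₁
    · exact ⟨v, hvV, hv⟩
    · refine ⟨M₁ v, ?_, ?_⟩
      · have := hbip v (M₁ v) (ha₁ v)
        tauto
      · intro h
        rw [hi₁] at h
        apply hv
        have := congrArg M₂ h
        rw [hi₂] at this
        exact this.symm
  set f : V → V := fun y => M₂ (M₁ y) with hf
  have hM₁inj : Function.Injective M₁ := fun a b h => by rw [← hi₁ a, h, hi₁]
  have hM₂inj : Function.Injective M₂ := fun a b h => by rw [← hi₂ a, h, hi₂]
  have hfinj : Function.Injective f := fun a b h => hM₁inj (hM₂inj h)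
  -- v₀ is a periodic point of f
  have hper : v₀ ∈ Function.periodicPts f := by
    set e : Equiv.Perm V :=
      (Function.Involutive.toPerm M₁ hi₁).trans (Function.Involutive.toPerm M₂ hi₂) with he
    have hce : ⇑e = f := rfl
    have hn : 0 < orderOf e := orderOf_pos e
    refine Function.mk_mem_periodicPts hn ?_
    show f^[orderOf e] v₀ = v₀
    rw [← hce, Equiv.Perm.iterate_eq_pow, pow_orderOf_eq_one]
    rfl
  set k := Function.minimalPeriod f v₀ with hk
  have hk0 : 0 < k := Function.minimalPeriod_pos_of_mem_periodicPts hper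
  have hkk : f^[k] v₀ = v₀ := Function.iterate_minimalPeriod
  have hinj : ∀ i j, i < k → j < k → f^[i] v₀ = f^[j] v₀ → i = j := fun i j hi hj h =>
    Function.iterate_injOn_Iio_minimalPeriod hi hj h
  -- all orbit points lie in V₁
  have hside : ∀ i, f^[i] v₀ ∈ V₁ := by
    intro i
    induction i with
    | zero => exact hv₀V
    | succ n ih =>
      rw [Function.iterate_succ_apply']
      set x := f^[n] v₀
      have h1 : M₁ x ∉ V₁ := (hbip x (M₁ x) (ha₁ x)).mp ih
      have h2 := hbip (M₁ x) (M₂ (M₁ x)) (ha₂ (M₁ x))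
      simp only [hf]
      tauto
  -- the matchings differ along the orbit
  have hD : ∀ i, M₁ (f^[i] v₀) ≠ M₂ (f^[i] v₀) := by
    intro i
    induction i with
    | zero => exact hv₀
    | succ n ih =>
      rw [Function.iterate_succ_apply']
      set x := f^[n] v₀
      intro h
      have h2 : M₂ (f x) = M₁ x := by simp only [hf]; rw [hi₂]
      rw [h2] at h
      have : f x = x := hM₁inj h
      apply ih
      have h3 : M₂ (M₁ x) = x := this
      have := congrArg M₂ h3
      rwa [hi₂] at this
  have hfix : ∀ i, f (f^[i] v₀) ≠ f^[i] v₀ := by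
    intro i h
    apply hD i
    have h3 : M₂ (M₁ (f^[i] v₀)) = f^[i] v₀ := h
    have := congrArg M₂ h3
    rwa [hi₂] at this
  have hk2 : 2 ≤ k := by
    by_contra h
    have hk1 : k = 1 := by omega
    rw [hk1] at hkk
    exact hfix 0 (by simpa using hkk)

  classical
  -- build the alternating cycle
  obtain ⟨m, hm⟩ : ∃ m, k = m + 1 := ⟨k - 1, by omega⟩
  have hitv : ∀ i, f^[i] (M₂ (M₁ v₀)) = f^[i + 1] v₀ := fun i =>
    (Function.iterate_succ_apply f i v₀).symm
  have hm1 : f^[m] (M₂ (M₁ v₀)) = v₀ := by rw [hitv, ← hm]; exact hkk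
  set Q : G.Walk (M₁ v₀) v₀ :=
    (SimpleGraph.Walk.cons (ha₂ (M₁ v₀)) (Stmt0Aux.cycW ha₁ ha₂ m (M₂ (M₁ v₀)))).copy rfl hm1
    with hQ
  set C : G.Walk v₀ v₀ := SimpleGraph.Walk.cons (ha₁ v₀) Q with hC
  have hMv₀ : M₁ v₀ ∉ V₁ := (hbip v₀ (M₁ v₀) (ha₁ v₀)).mp hv₀V
  have hM1V : ∀ i, M₁ (f^[i] v₀) ∉ V₁ := fun i => (hbip _ _ (ha₁ _)).mp (hside i)
  -- C is a cycle
  have hCcyc : C.IsCycle := by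
    rw [hC, SimpleGraph.Walk.cons_isCycle_iff]
    constructor
    · apply SimpleGraph.Walk.IsPath.mk'
      have hsup : Q.support = (M₁ v₀ :: Stmt0Aux.vl M₁ M₂ m (M₂ (M₁ v₀))) ++ [v₀] := by
        rw [hQ, SimpleGraph.Walk.support_copy, SimpleGraph.Walk.support_cons,
          Stmt0Aux.support_cycW, hm1]
        simp
      rw [hsup]
      have hperm : (Stmt0Aux.vl M₁ M₂ (m + 1) v₀).Perm
          ((M₁ v₀ :: Stmt0Aux.vl M₁ M₂ m (M₂ (M₁ v₀))) ++ [v₀]) :=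
        (List.perm_append_singleton v₀ _).symm
      exact hperm.nodup (Stmt0Aux.nodup_vl hM₁inj (fun y hy => (hbip y (M₁ y) (ha₁ y)).mp hy)
        (m + 1) v₀ (fun i j hi hj hij => hinj i j (by omega) (by omega) hij)
        (fun i => hside i))
    · intro hmem
      rw [hQ, SimpleGraph.Walk.edges_copy, SimpleGraph.Walk.edges_cons] at hmem
      rcases List.mem_cons.mp hmem with heq | hmem
      · rcases Sym2.eq_iff.mp heq with ⟨h1, _⟩ | ⟨h1, h2⟩
        · exact hMv₀ (h1 ▸ hv₀V)
        · exact hfix 0 (by simpa using h1.symm)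
      · obtain ⟨i, hi, h | h⟩ := Stmt0Aux.edges_cycW ha₁ ha₂ hmem
        · rw [hitv] at h
          rcases Sym2.eq_iff.mp h with ⟨h1, _⟩ | ⟨h1, _⟩
          · exact absurd (hinj 0 (i + 1) (by omega) (by omega) h1) (by omega)
          · exact hM1V (i + 1) (h1 ▸ hv₀V)
        · rw [hitv] at h
          rcases Sym2.eq_iff.mp h with ⟨h1, _⟩ | ⟨_, h2⟩
          · exact hM1V (i + 1) (h1 ▸ hv₀V)
          · exact absurd (hinj 0 (i + 1) (by omega) (by omega) (hM₁inj h2)) (by omega)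
  -- the circulation of C
  have hM2f : ∀ i, M₂ (f^[i + 1] v₀) = M₁ (f^[i] v₀) := by
    intro i
    rw [Function.iterate_succ_apply']
    exact hi₂ _
  have e1 : ((C.darts.map (fun d => w d.toProd.1 d.toProd.2)).sum : ℤ)
      = ∑ i ∈ Finset.range k,
          (w (f^[i] v₀) (M₁ (f^[i] v₀)) + w (M₁ (f^[i] v₀)) (f^[i + 1] v₀)) := by
    rw [hm, Finset.sum_range_succ']
    rw [hC, hQ]
    simp only [SimpleGraph.Walk.darts_cons, SimpleGraph.Walk.darts_copy, List.map_cons,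
      List.sum_cons, Stmt0Aux.dartsum_cycW w ha₁ ha₂ m (M₂ (M₁ v₀))]
    have h1v : f^[1] v₀ = M₂ (M₁ v₀) := rfl
    simp only [← hf]
    simp only [hitv, Function.iterate_zero_apply, h1v]
    ring
  have e2 : ((C.darts.map (fun d => w d.toProd.1 d.toProd.2)).sum : ℤ)
      = (∑ i ∈ Finset.range k, w (f^[i] v₀) (M₁ (f^[i] v₀)))
        - ∑ i ∈ Finset.range k, w (f^[i] v₀) (M₂ (f^[i] v₀)) := by
    rw [e1]
    have term : ∀ i, w (M₁ (f^[i] v₀)) (f^[i + 1] v₀)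
        = - w (f^[i + 1] v₀) (M₂ (f^[i + 1] v₀)) := by
      intro i
      rw [hM2f i, hskew]
    simp only [term]
    rw [Finset.sum_add_distrib, Finset.sum_neg_distrib]
    have hshift : (∑ i ∈ Finset.range k, w (f^[i + 1] v₀) (M₂ (f^[i + 1] v₀)))
        = ∑ i ∈ Finset.range k, w (f^[i] v₀) (M₂ (f^[i] v₀)) := by
      have h1 := Finset.sum_range_succ (fun j => w (f^[j] v₀) (M₂ (f^[j] v₀))) k
      have h2 := Finset.sum_range_succ' (fun j => w (f^[j] v₀) (M₂ (f^[j] v₀))) k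
      have h3 : w (f^[k] v₀) (M₂ (f^[k] v₀)) = w (f^[0] v₀) (M₂ (f^[0] v₀)) := by
        rw [hkk]
        simp
      rw [h1, h3] at h2
      simp only [Function.iterate_zero_apply] at h2 ⊢
      omega
    rw [hshift]
    ring
  -- the orbit and its matching-swap
  set O : Finset V := (Finset.range k).image (fun i => f^[i] v₀) with hO
  have hsumO : ∀ g : V → ℤ, ∑ x ∈ O, g x = ∑ i ∈ Finset.range k, g (f^[i] v₀) := by
    intro g
    rw [hO]
    refine Finset.sum_image ?_
    intro a ha b hb hab
    exact hinj a b (Finset.mem_range.mp ha) (Finset.mem_range.mp hb) hab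
  have hOmem : ∀ x, x ∈ O ↔ ∃ i < k, f^[i] v₀ = x := by
    intro x
    simp [hO, Finset.mem_image]
  have hOf : ∀ x ∈ O, M₂ (M₁ x) ∈ O := by
    intro x hx
    obtain ⟨i, hi, rfl⟩ := (hOmem x).mp hx
    refine (hOmem _).mpr ⟨(i + 1) % k, Nat.mod_lt _ hk0, ?_⟩
    rw [hk]
    rw [Function.iterate_mod_minimalPeriod_eq]
    rw [Function.iterate_succ_apply']
  have hOg : ∀ x ∈ O, M₁ (M₂ x) ∈ O := by
    intro x hx
    obtain ⟨i, hi, rfl⟩ := (hOmem x).mp hx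
    have hg : ∀ y, M₁ (M₂ (M₂ (M₁ y))) = y := fun y => by rw [hi₂, hi₁]
    rcases Nat.eq_zero_or_pos i with rfl | hipos
    · refine (hOmem _).mpr ⟨m, by omega, ?_⟩
      have h2 : f (f^[m] v₀) = v₀ := by
        rw [← Function.iterate_succ_apply' f m v₀]
        show f^[m + 1] v₀ = v₀
        rw [← hm]
        exact hkk
      have h3 : M₁ (M₂ v₀) = f^[m] v₀ := by
        conv_lhs => rw [← h2]
        exact hg _
      simp only [Function.iterate_zero_apply]
      exact h3.symm
    · obtain ⟨j, rfl⟩ : ∃ j, i = j + 1 := ⟨i - 1, by omega⟩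
      refine (hOmem _).mpr ⟨j, by omega, ?_⟩
      rw [Function.iterate_succ_apply']
      exact (hg _).symm
  set S : Finset V := O ∪ O.image M₁ with hS
  have hSmem : ∀ x, x ∈ S ↔ x ∈ O ∨ ∃ y ∈ O, M₁ y = x := by
    intro x
    simp [hS, Finset.mem_union, Finset.mem_image]
  have hSM₁ : ∀ x, x ∈ S → M₁ x ∈ S := by
    intro x hx
    rcases (hSmem x).mp hx with hxO | ⟨y, hy, rfl⟩
    · exact (hSmem _).mpr (Or.inr ⟨x, hxO, rfl⟩)
    · rw [hi₁]
      exact (hSmem _).mpr (Or.inl hy)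
  have hSM₂ : ∀ x, x ∈ S → M₂ x ∈ S := by
    intro x hx
    rcases (hSmem x).mp hx with hxO | ⟨y, hy, rfl⟩
    · have := hOg x hxO
      refine (hSmem _).mpr (Or.inr ⟨M₁ (M₂ x), this, ?_⟩)
      rw [hi₁]
    · exact (hSmem _).mpr (Or.inl (hOf y hy))
  have hOV₁ : ∀ x ∈ O, x ∈ V₁ := by
    intro x hx
    obtain ⟨i, _, rfl⟩ := (hOmem x).mp hx
    exact hside i
  have hSV₁ : ∀ x, x ∈ S → x ∈ V₁ → x ∈ O := by
    intro x hx hxV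
    rcases (hSmem x).mp hx with hxO | ⟨y, hy, rfl⟩
    · exact hxO
    · exact absurd hxV ((hbip y (M₁ y) (ha₁ y)).mp (hOV₁ y hy))
  -- two swapped matchings
  have hswap : ∀ N₁ N₂ : V → V, (∀ v, N₁ (N₁ v) = v) → (∀ v, G.Adj v (N₁ v)) →
      (∀ v, N₂ (N₂ v) = v) → (∀ v, G.Adj v (N₂ v)) →
      (∀ x, x ∈ S → N₁ x ∈ S) → (∀ x, x ∈ S → N₂ x ∈ S) →
      ((∀ v, (fun v => if v ∈ S then N₂ v else N₁ v) ((fun v => if v ∈ S then N₂ v else N₁ v) v) = v)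
        ∧ ∀ v, G.Adj v ((fun v => if v ∈ S then N₂ v else N₁ v) v))
      ∧ (∑ v : V, if v ∈ V₁ then w v ((fun v => if v ∈ S then N₂ v else N₁ v) v) else 0)
        = (∑ v : V, if v ∈ V₁ then w v (N₁ v) else 0)
          + ((∑ x ∈ O, w x (N₂ x)) - ∑ x ∈ O, w x (N₁ x)) := by
    intro N₁ N₂ hiN₁ haN₁ hiN₂ haN₂ hSN₁ hSN₂
    refine ⟨⟨fun v => ?_, fun v => ?_⟩, ?_⟩
    · dsimp only
      by_cases hv : v ∈ S
      · rw [if_pos hv, if_pos (hSN₂ v hv), hiN₂]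
      · have hnv : N₁ v ∉ S := fun h => by
          have := hSN₁ (N₁ v) h
          rw [hiN₁] at this
          exact hv this
        rw [if_neg hv, if_neg hnv, hiN₁]
    · dsimp only
      by_cases hv : v ∈ S
      · rw [if_pos hv]; exact haN₂ v
      · rw [if_neg hv]; exact haN₁ v
    · have key : ∀ v : V, (if v ∈ V₁ then w v (if v ∈ S then N₂ v else N₁ v) else 0)
          = (if v ∈ V₁ then w v (N₁ v) else 0)
            + (if v ∈ O then w v (N₂ v) - w v (N₁ v) else 0) := by
        intro v
        by_cases hvS : v ∈ S
        · by_cases hvV : v ∈ V₁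
          · have hvO : v ∈ O := hSV₁ v hvS hvV
            rw [if_pos hvV, if_pos hvS, if_pos hvV, if_pos hvO]
            ring
          · have hvO : v ∉ O := fun h => hvV (hOV₁ v h)
            rw [if_neg hvV, if_neg hvV, if_neg hvO]
            ring
        · have hvO : v ∉ O := fun h => hvS ((hSmem v).mpr (Or.inl h))
          rw [if_neg hvS, if_neg hvO]
          ring
      calc (∑ v : V, if v ∈ V₁ then w v (if v ∈ S then N₂ v else N₁ v) else 0)
          = ∑ v : V, ((if v ∈ V₁ then w v (N₁ v) else 0)
              + (if v ∈ O then w v (N₂ v) - w v (N₁ v) else 0)) :=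
            Finset.sum_congr rfl (fun v _ => key v)
        _ = (∑ v : V, if v ∈ V₁ then w v (N₁ v) else 0)
              + ∑ v : V, (if v ∈ O then w v (N₂ v) - w v (N₁ v) else 0) :=
            Finset.sum_add_distrib
        _ = (∑ v : V, if v ∈ V₁ then w v (N₁ v) else 0)
              + ((∑ x ∈ O, w x (N₂ x)) - ∑ x ∈ O, w x (N₁ x)) := by
            congr 1
            rw [Finset.sum_ite_mem, Finset.univ_inter, Finset.sum_sub_distrib]
  obtain ⟨hgood₃, hW₃⟩ := hswap M₁ M₂ hi₁ ha₁ hi₂ ha₂ hSM₁ hSM₂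
  obtain ⟨hgood₄, hW₄⟩ := hswap M₂ M₁ hi₂ ha₂ hi₁ ha₁ hSM₂ hSM₁
  have hle₁ := hmin₁ (fun v => if v ∈ S then M₂ v else M₁ v) hgood₃
  have hle₂ := hmin₂ (fun v => if v ∈ S then M₁ v else M₂ v) hgood₄
  rw [hW₃] at hle₁
  rw [hW₄] at hle₂
  have hAeq : (∑ x ∈ O, w x (M₁ x)) = ∑ x ∈ O, w x (M₂ x) := by omega
  apply hcirc v₀ C hCcyc
  rw [e2, ← hsumO (fun x => w x (M₁ x)), ← hsumO (fun x => w x (M₂ x)), hAeq]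
  ring
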